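/- Let T ≥ 2, 0 < a ≤ b, ε > 0, and fix vectors ρ_{ij} ∈ [a,b]^K for all i ≠ j in [T] with the property: for every directed cycle (i_1,...,i_L,i_1) on distinct vertices in [T], max_ℓ (1/K)∑_k ρ_{i_ℓ i_{ℓ+1}}^k ≥ 1 + ε. Let w_1,...,w_T be i.i.d. uniform on Δ_{K−1} and form the random directed graph G on [T] with edge i → j iff ⟨ρ_{ij}, w_j⟩ ≤ 1. Then P(G contains a directed cycle) ≤ C_T · exp(−K ε² / (4(b−a)²)), where C_T = ∑_{L=2}^T binom(T,L)(L−1)!. -/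

import Mathlib

set_option maxHeartbeats 1000000

open MeasureTheory ProbabilityTheory Finset
open scoped ENNReal

/-- The uniform distribution on the simplex `Δ_{K-1}` (i.e. `Dirichlet(1,…,1)`),
realised as the law of `Y / (∑ Y)` with `Y k` i.i.d. `Exponential(1)`. -/
noncomputable def simplexUniform (K : ℕ) : Measure (Fin K → ℝ) :=
  (Measure.pi fun _ : Fin K => ProbabilityTheory.expMeasure 1).map
    (fun Y k => Y k / ∑ j, Y j)

section Helpers

lemma logL1 {y : ℝ} (hy : |y| ≤ 1/3) : y - y^2 ≤ Real.log (1 + y) := by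
  have h1 : |(-y)| < 1 := by rw [abs_neg]; linarith [abs_nonneg y]
  have h := Real.abs_log_sub_add_sum_range_le h1 2
  have hsum : ∑ i ∈ Finset.range 2, (-y)^(i+1)/(i+1) = -y + y^2/2 := by
    simp [Finset.sum_range_succ]; ring
  rw [hsum] at h
  have hlog : Real.log (1 - (-y)) = Real.log (1 + y) := by ring_nf
  rw [hlog] at h
  have habs : |(-y)|^(2+1)/(1-|(-y)|) ≤ (3/2) * |y|^3 := by
    rw [abs_neg]
    have h3 : (1:ℝ) - |y| ≥ 2/3 := by linarith
    rw [div_le_iff₀ (by linarith)]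
    nlinarith [abs_nonneg y, pow_nonneg (abs_nonneg y) 3]
  have h2 := (abs_le.mp (h.trans habs)).1
  have hy3 : (3/2) * |y|^3 ≤ y^2/2 := by
    have : |y|^3 = |y| * y^2 := by rw [pow_succ, sq_abs]; ring
    rw [this]
    nlinarith [sq_nonneg y, abs_nonneg y]
  nlinarith [h2]

lemma logL2 {u : ℝ} (h0 : 0 ≤ u) (h1 : u ≤ 1/2) : (5/8) * u ≤ Real.log (1 + u) := by
  have habs : |(-u)| < 1 := by rw [abs_neg, abs_of_nonneg h0]; linarith
  have h := Real.abs_log_sub_add_sum_range_le habs 5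
  have hsum : ∑ i ∈ Finset.range 5, (-u)^(i+1)/(i+1)
      = -u + u^2/2 - u^3/3 + u^4/4 - u^5/5 := by
    simp [Finset.sum_range_succ]; ring
  rw [hsum] at h
  have hlog : Real.log (1 - (-u)) = Real.log (1 + u) := by ring_nf
  rw [hlog] at h
  have habs2 : |(-u)|^(5+1)/(1-|(-u)|) ≤ 2*u^6 := by
    rw [abs_neg, abs_of_nonneg h0]
    rw [div_le_iff₀ (by linarith)]
    have : u ^ (5+1) = u ^ 6 := by norm_num
    rw [this]
    nlinarith [mul_nonneg (pow_nonneg h0 6) (by linarith : (0:ℝ) ≤ 1 - 2*u)]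
  have h2 := (abs_le.mp (h.trans habs2)).1
  nlinarith [pow_nonneg h0 2, pow_nonneg h0 3, pow_nonneg h0 4, pow_nonneg h0 5, pow_nonneg h0 6, sq_nonneg (u - 1/2), sq_nonneg u]

lemma chernoff_core' (K : ℕ) (hK : 1 ≤ K) (ε r t p α β : ℝ) (c : Fin K → ℝ)
    (hε : 0 < ε) (hr : 0 < r) (hεr : ε ≤ r)
    (ht_def : t = ε/(2*r^2)) (hp_def : p = 1 + t*ε)
    (hα : 0 < α) (hβ : 0 ≤ β) (hαβ : α + β = r)
    (hc : ∀ k, ε - α ≤ c k ∧ c k ≤ ε + β)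
    (hmean : ε * K ≤ ∑ k, c k) :
    (K : ℝ) * (ε^2/(4*r^2)) ≤ ∑ k, Real.log (1 + t * c k) := by
  have ht : 0 < t := by rw [ht_def]; positivity
  have hp1 : 1 ≤ p := by rw [hp_def]; nlinarith
  have hp0 : 0 < p := by linarith
  have htε : t*ε ≤ 1/2 := by
    rw [ht_def, div_mul_eq_mul_div, div_le_iff₀ (by positivity)]
    nlinarith
  have htr3 : 3*(t*r) ≤ p := by
    have key : 3*ε*r ≤ 2*r^2 + ε^2 := by nlinarith [mul_nonneg (sub_nonneg.2 hεr) (by linarith : (0:ℝ) ≤ 2*r - ε)]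
    have e1 : 3*(t*r) = 3*ε*r/(2*r^2) := by rw [ht_def]; ring
    have e2 : p = (2*r^2 + ε^2)/(2*r^2) := by rw [hp_def, ht_def]; field_simp
    rw [e1, e2]
    gcongr
  obtain ⟨A, hA_def⟩ : ∃ A : ℝ, A = Real.log p - t^2*(α*β)/p^2 := ⟨_, rfl⟩
  obtain ⟨B, hB_def⟩ : ∃ B : ℝ, B = t/p - t^2*(β-α)/p^2 := ⟨_, rfl⟩
  have step1 : ∀ k, A + B * (c k - ε) ≤ Real.log (1 + t * c k) := by
    intro k
    obtain ⟨hck1, hck2⟩ := hc k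
    have habsck : |c k - ε| ≤ r := by
      rw [abs_le]; constructor <;> nlinarith
    have hyabs : |t*(c k - ε)/p| ≤ 1/3 := by
      rw [abs_div, abs_of_pos hp0, abs_mul, abs_of_pos ht, div_le_iff₀ hp0]
      nlinarith [abs_nonneg (c k - ε), mul_le_mul_of_nonneg_left habsck (le_of_lt ht)]
    have h1y : 0 < 1 + t*(c k - ε)/p := by have := (abs_le.mp hyabs).1; linarith
    have hsplit : 1 + t * c k = p * (1 + t*(c k - ε)/p) := by
      field_simp; rw [hp_def]; ring
    rw [hsplit, Real.log_mul (ne_of_gt hp0) (ne_of_gt h1y)]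
    have hlog := logL1 hyabs
    have hquad : (c k - ε)^2 ≤ α*β + (β-α)*(c k - ε) := by
      nlinarith [mul_nonneg (by linarith : (0:ℝ) ≤ β - (c k - ε))
        (by linarith : (0:ℝ) ≤ (c k - ε) + α)]
    have hid : (t*(c k - ε)/p - (t*(c k - ε)/p)^2) - (B * (c k - ε) - t^2*(α*β)/p^2)
        = t^2*((α*β + (β-α)*(c k-ε)) - (c k-ε)^2)/p^2 := by
      rw [hB_def]; ring
    have hfrac : 0 ≤ t^2*((α*β + (β-α)*(c k-ε)) - (c k-ε)^2)/p^2 := by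
      apply div_nonneg _ (sq_nonneg p)
      exact mul_nonneg (sq_nonneg t) (by linarith)
    have hkey : B * (c k - ε) - t^2*(α*β)/p^2 ≤ t*(c k - ε)/p - (t*(c k - ε)/p)^2 := by
      linarith
    rw [hA_def]
    linarith
  have hsum := Finset.sum_le_sum (fun k (_ : k ∈ Finset.univ) => step1 k)
  rw [Finset.sum_add_distrib, Finset.sum_const, Finset.card_univ, Fintype.card_fin,
    ← Finset.mul_sum, nsmul_eq_mul] at hsum
  have hBpos : 0 ≤ B := by
    rw [hB_def, sub_nonneg, div_le_div_iff₀ (by positivity) hp0]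
    nlinarith [mul_le_mul_of_nonneg_right (show t*r ≤ p/3 by linarith) (mul_nonneg ht.le hp0.le),
      mul_le_mul_of_nonneg_left (show β - α ≤ r by linarith)
        (mul_nonneg (mul_nonneg ht.le ht.le) hp0.le),
      mul_nonneg (mul_nonneg ht.le hp0.le) hp0.le]
  have hsum2 : ∑ k, (c k - ε) = (∑ k, c k) - K * ε := by
    rw [Finset.sum_sub_distrib, Finset.sum_const, Finset.card_univ, Fintype.card_fin, nsmul_eq_mul]
  have hB2 : 0 ≤ B * ∑ k, (c k - ε) := by
    apply mul_nonneg hBpos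
    rw [hsum2]; linarith
  have hA2 : ε^2/(4*r^2) ≤ A := by
    rw [hA_def]
    have hlogp : (5/8) * (t*ε) ≤ Real.log p := by
      rw [hp_def]; exact logL2 (by positivity) htε
    have h1 : t^2*(α*β)/p^2 ≤ t^2*(r^2/4) := by
      apply div_le_of_le_mul₀ (by positivity) (by positivity)
      have hab4 : α*β ≤ r^2/4 := by nlinarith [sq_nonneg (α - β)]
      have ht2 : t^2*(α*β) ≤ t^2*(r^2/4) := by nlinarith [sq_nonneg t]
      calc t^2*(α*β) ≤ t^2*(r^2/4) := ht2
        _ = t^2*(r^2/4) * 1 := by ring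
        _ ≤ t^2*(r^2/4) * p^2 := by
            apply mul_le_mul_of_nonneg_left (one_le_pow₀ hp1) (by positivity)
    have h2 : (5/8) * (t*ε) - t^2*(r^2/4) = ε^2/(4*r^2) := by
      rw [ht_def]; field_simp; ring
    linarith
  calc (K : ℝ) * (ε^2/(4*r^2)) ≤ K * A := by
        apply mul_le_mul_of_nonneg_left hA2 (by positivity)
    _ ≤ K * A + B * ∑ k, (c k - ε) := by linarith
    _ ≤ ∑ k, Real.log (1 + t * c k) := hsum

lemma lintegral_pi_prod {n : ℕ} (μ : Measure ℝ) [SigmaFinite μ]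
    (f : Fin n → ℝ → ℝ≥0∞) (hf : ∀ i, Measurable (f i)) :
    ∫⁻ x : Fin n → ℝ, ∏ i, f i (x i) ∂(Measure.pi fun _ => μ) = ∏ i, ∫⁻ y, f i y ∂μ := by
  induction n with
  | zero =>
      simp [lintegral_const, Measure.pi_univ]
  | succ n ih =>
      calc
        ∫⁻ x : Fin (n+1) → ℝ, ∏ i, f i (x i) ∂(Measure.pi fun _ => μ)
            = ∫⁻ z : ℝ × (Fin n → ℝ), f 0 z.1 * ∏ i : Fin n, f i.succ (z.2 i)
              ∂(μ.prod (Measure.pi fun _ => μ)) := by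
          rw [← ((measurePreserving_piFinSuccAbove (fun _ : Fin (n+1) => μ) 0).symm).lintegral_comp_emb
            (MeasurableEquiv.measurableEmbedding _) (fun x => ∏ i, f i (x i))]
          refine lintegral_congr fun z => ?_
          simp only [MeasurableEquiv.piFinSuccAbove_symm_apply, Fin.insertNthEquiv,
            Equiv.coe_fn_mk, Fin.insertNth_zero, Fin.prod_univ_succ, Fin.cons_zero, Fin.cons_succ]
          rfl
        _ = (∫⁻ y, f 0 y ∂μ) * ∫⁻ v : Fin n → ℝ, ∏ i : Fin n, f i.succ (v i)
              ∂(Measure.pi fun _ => μ) :=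
          lintegral_prod_mul ((hf 0).aemeasurable)
            ((Finset.univ.measurable_prod fun (i : Fin n) (_ : i ∈ Finset.univ) =>
              (hf i.succ).comp (measurable_pi_apply i)).aemeasurable)
        _ = (∫⁻ y, f 0 y ∂μ) * ∏ i : Fin n, ∫⁻ y, f i.succ y ∂μ := by
          rw [ih (fun i => f i.succ) (fun i => hf i.succ)]
        _ = ∏ i, ∫⁻ y, f i y ∂μ := (Fin.prod_univ_succ (fun i => ∫⁻ y, f i y ∂μ)).symm

lemma expMeasure_mgf {s : ℝ} (hs : -1 < s) :
    ∫⁻ y, ENNReal.ofReal (Real.exp (-(s * y))) ∂(expMeasure 1)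
      = ENNReal.ofReal (1/(1+s)) := by
  have h1s : 0 < 1 + s := by linarith
  have hg : Measurable fun y : ℝ => ENNReal.ofReal (Real.exp (-(s * y))) :=
    ((measurable_id.const_mul s).neg.exp).ennreal_ofReal
  rw [expMeasure, gammaMeasure,
    lintegral_withDensity_eq_lintegral_mul _
      (show Measurable (gammaPDF 1 1) from (measurable_gammaPDFReal 1 1).ennreal_ofReal) hg]
  have hpt : ∀ y : ℝ, (gammaPDF 1 1 * fun y => ENNReal.ofReal (Real.exp (-(s * y)))) y
      = ENNReal.ofReal (1/(1+s)) * exponentialPDF (1+s) y := by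
    intro y
    simp only [Pi.mul_apply]
    rw [show gammaPDF 1 1 y = exponentialPDF 1 y from rfl]
    by_cases hy : 0 ≤ y
    · rw [exponentialPDF_of_nonneg hy, exponentialPDF_of_nonneg hy,
        ← ENNReal.ofReal_mul (by positivity), ← ENNReal.ofReal_mul (by positivity)]
      congr 1
      rw [one_mul, ← Real.exp_add, one_div, inv_mul_cancel_left₀ (ne_of_gt h1s)]
      congr 1
      ring
    · rw [exponentialPDF_of_neg (lt_of_not_ge hy), exponentialPDF_of_neg (lt_of_not_ge hy)]
      simp
  simp_rw [hpt]
  rw [lintegral_const_mul _ (show Measurable (exponentialPDF (1+s)) from (measurable_exponentialPDFReal (1+s)).ennreal_ofReal),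
    lintegral_exponentialPDF_eq_one h1s, mul_one]

lemma pi_exp_null (K : ℕ) :
    (Measure.pi fun _ : Fin K => expMeasure 1) {Y | ∃ k, Y k ≤ 0} = 0 := by
  haveI : IsProbabilityMeasure (ProbabilityTheory.expMeasure 1) :=
    isProbabilityMeasure_expMeasure one_pos
  have h1 : expMeasure 1 (Set.Iio 0) = 0 := by
    rw [expMeasure, gammaMeasure, withDensity_apply _ measurableSet_Iio]
    exact lintegral_gammaPDF_of_nonpos le_rfl
  have h2 : expMeasure 1 {(0:ℝ)} = 0 :=
    (withDensity_absolutelyContinuous _ _) (measure_singleton 0)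
  have h0 : expMeasure 1 (Set.Iic 0) = 0 := by
    refine le_antisymm ?_ zero_le
    calc expMeasure 1 (Set.Iic 0) ≤ expMeasure 1 (Set.Iio 0 ∪ {0}) := by
          apply measure_mono; intro x hx
          simp only [Set.mem_Iic] at hx
          rcases lt_or_eq_of_le hx with h | h
          · exact Or.inl h
          · exact Or.inr (by simp [h])
      _ ≤ expMeasure 1 (Set.Iio 0) + expMeasure 1 {0} := measure_union_le _ _
      _ = 0 := by rw [h1, h2, add_zero]
  have : {Y : Fin K → ℝ | ∃ k, Y k ≤ 0} = ⋃ k, Function.eval k ⁻¹' (Set.Iic 0) := by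
    ext Y; simp [Function.eval, Set.mem_iUnion]
  rw [this]
  exact measure_iUnion_null fun k => Measure.pi_eval_preimage_null _ h0

lemma edge_bound (K : ℕ) (hK : 1 ≤ K) {a b ε : ℝ} (ha : 0 < a) (hab : a ≤ b) (hε : 0 < ε)
    (ρv : Fin K → ℝ) (hbd : ∀ k, a ≤ ρv k ∧ ρv k ≤ b)
    (hcarli : 1 + ε ≤ ((1:ℝ)/K) * ∑ k, ρv k) :
    simplexUniform K {v | ∑ k, ρv k * v k ≤ 1}
      ≤ ENNReal.ofReal (Real.exp (-((K:ℝ) * ε ^ 2) / (4 * (b - a) ^ 2))) := by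
  haveI : IsProbabilityMeasure (ProbabilityTheory.expMeasure 1) :=
    isProbabilityMeasure_expMeasure one_pos
  have hKpos : (0:ℝ) < K := by exact_mod_cast hK
  have hsumρ : (K:ℝ)*(1+ε) ≤ ∑ k, ρv k := by
    rw [one_div, inv_mul_eq_div, le_div_iff₀ hKpos] at hcarli
    linarith
  have hsumub : ∑ k, ρv k ≤ (K:ℝ)*b := by
    calc ∑ k, ρv k ≤ ∑ _k : Fin K, b := Finset.sum_le_sum (fun k _ => (hbd k).2)
      _ = (K:ℝ)*b := by rw [Finset.sum_const, Finset.card_univ, Fintype.card_fin, nsmul_eq_mul]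
  have hεb1 : ε ≤ b - 1 := by nlinarith
  set μK := Measure.pi fun _ : Fin K => ProbabilityTheory.expMeasure 1 with hμK
  have hφ : Measurable (fun (Y : Fin K → ℝ) (k : Fin K) => Y k / ∑ j, Y j) :=
    measurable_pi_lambda _ fun k => (measurable_pi_apply k).div
      (Finset.univ.measurable_sum fun j _ => measurable_pi_apply j)
  have hA : MeasurableSet {v : Fin K → ℝ | ∑ k, ρv k * v k ≤ 1} :=
    measurableSet_le (Finset.univ.measurable_sum fun k _ =>
      (measurable_pi_apply k).const_mul _) measurable_const
  rw [simplexUniform, Measure.map_apply hφ hA]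
  have hN : μK {Y : Fin K → ℝ | ∃ k, Y k ≤ 0} = 0 := pi_exp_null K
  by_cases hcase : a ≤ 1
  · -- main case
    obtain ⟨r, hr_def⟩ : ∃ r : ℝ, r = b - a := ⟨_, rfl⟩
    have hr : 0 < r := by simp only [hr_def]; linarith
    have hεr : ε ≤ r := by simp only [hr_def]; linarith
    obtain ⟨t, ht_def⟩ : ∃ t : ℝ, t = ε/(2*r^2) := ⟨_, rfl⟩
    have ht : 0 < t := by rw [ht_def]; positivity
    have htr : t * r ≤ 1/2 := by
      rw [ht_def, div_mul_eq_mul_div, div_le_iff₀ (by positivity)]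
      nlinarith
    obtain ⟨c, hc_def⟩ : ∃ c : Fin K → ℝ, c = fun k => ρv k - 1 := ⟨_, rfl⟩
    have hck : ∀ k, a - 1 ≤ c k ∧ c k ≤ b - 1 := by
      intro k; constructor
      · simp only [hc_def]; linarith [(hbd k).1]
      · simp only [hc_def]; linarith [(hbd k).2]
    have htc : ∀ k, -1 < t * c k := by
      intro k
      have h1 : -(t*r) ≤ t * c k := by
        have : -r ≤ c k := by have := (hck k).1; simp only [hr_def] at *; linarith
        nlinarith
      linarith
    -- subset step
    have hsub : (fun (Y : Fin K → ℝ) (k : Fin K) => Y k / ∑ j, Y j) ⁻¹'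
        {v : Fin K → ℝ | ∑ k, ρv k * v k ≤ 1}
        ⊆ {Y : Fin K → ℝ | ∑ k, c k * Y k ≤ 0} ∪ {Y : Fin K → ℝ | ∃ k, Y k ≤ 0} := by
      intro Y hY
      by_cases hYN : ∃ k, Y k ≤ 0
      · exact Or.inr hYN
      · push_neg at hYN
        left
        have hS : 0 < ∑ j, Y j :=
          Finset.sum_pos (fun j _ => hYN j) ⟨⟨0, by omega⟩, Finset.mem_univ _⟩
        have hY' : (∑ k, ρv k * Y k) / (∑ j, Y j) ≤ 1 := by
          have := (Set.mem_preimage.mp hY : ∑ k, ρv k * (Y k / ∑ j, Y j) ≤ 1)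
          calc (∑ k, ρv k * Y k) / (∑ j, Y j) = ∑ k, ρv k * (Y k / ∑ j, Y j) := by
                rw [Finset.sum_div]; exact Finset.sum_congr rfl fun k _ => (mul_div_assoc _ _ _)
            _ ≤ 1 := this
        have h2 : ∑ k, ρv k * Y k ≤ ∑ j, Y j := (div_le_one hS).mp hY'
        have h3 : ∑ k, c k * Y k = (∑ k, ρv k * Y k) - ∑ j, Y j := by
          rw [← Finset.sum_sub_distrib]
          exact Finset.sum_congr rfl fun k _ => by simp only [hc_def]; ring
        simp only [Set.mem_setOf_eq]
        rw [h3]; linarith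
    have hmono := measure_mono hsub (μ := μK)
    have hunion := measure_union_le (μ := μK) {Y : Fin K → ℝ | ∑ k, c k * Y k ≤ 0}
      {Y : Fin K → ℝ | ∃ k, Y k ≤ 0}
    -- Markov / Chernoff
    have hgm : ∀ k, Measurable fun y : ℝ => ENNReal.ofReal (Real.exp (-((t * c k) * y))) :=
      fun k => ((measurable_id.const_mul (t * c k)).neg.exp).ennreal_ofReal
    have hprodmeas : Measurable fun Y : Fin K → ℝ =>
        ∏ k, ENNReal.ofReal (Real.exp (-((t * c k) * Y k))) :=
      Finset.univ.measurable_prod fun k _ => (hgm k).comp (measurable_pi_apply k)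
    have hmarkov : μK {Y : Fin K → ℝ | ∑ k, c k * Y k ≤ 0}
        ≤ ∫⁻ Y, ∏ k, ENNReal.ofReal (Real.exp (-((t * c k) * Y k))) ∂μK := by
      have hsub2 : {Y : Fin K → ℝ | ∑ k, c k * Y k ≤ 0}
          ⊆ {Y : Fin K → ℝ | 1 ≤ ∏ k, ENNReal.ofReal (Real.exp (-((t * c k) * Y k)))} := by
        intro Y hY
        have h1 : ∏ k, ENNReal.ofReal (Real.exp (-((t * c k) * Y k)))
            = ENNReal.ofReal (Real.exp (∑ k, -((t * c k) * Y k))) := by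
          rw [Real.exp_sum, ENNReal.ofReal_prod_of_nonneg (fun k _ => (Real.exp_nonneg _))]
        have h2 : 0 ≤ ∑ k, -((t * c k) * Y k) := by
          have : ∑ k, -((t * c k) * Y k) = -t * ∑ k, c k * Y k := by
            rw [Finset.mul_sum]; exact Finset.sum_congr rfl fun k _ => by ring
          rw [this]
          have hY' : ∑ k, c k * Y k ≤ 0 := hY
          nlinarith
        simp only [Set.mem_setOf_eq, h1]
        exact ENNReal.one_le_ofReal.mpr (Real.one_le_exp h2)
      calc μK {Y : Fin K → ℝ | ∑ k, c k * Y k ≤ 0}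
          ≤ μK {Y : Fin K → ℝ | 1 ≤ ∏ k, ENNReal.ofReal (Real.exp (-((t * c k) * Y k)))} :=
            measure_mono hsub2
        _ ≤ ∫⁻ Y, ∏ k, ENNReal.ofReal (Real.exp (-((t * c k) * Y k))) ∂μK := by
            simpa using mul_meas_ge_le_lintegral₀ hprodmeas.aemeasurable 1
    have hlint : ∫⁻ Y, ∏ k, ENNReal.ofReal (Real.exp (-((t * c k) * Y k))) ∂μK
        = ∏ k, ENNReal.ofReal (1/(1 + t * c k)) := by
      rw [hμK, lintegral_pi_prod _ _ hgm]
      exact Finset.prod_congr rfl fun k _ => expMeasure_mgf (htc k)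
    -- final numeric bound
    have h1tc : ∀ k, 0 < 1 + t * c k := fun k => by linarith [htc k]
    have hfinal : ∏ k, ENNReal.ofReal (1/(1 + t * c k))
        ≤ ENNReal.ofReal (Real.exp (-((K:ℝ) * ε ^ 2) / (4 * (b - a) ^ 2))) := by
      rw [← ENNReal.ofReal_prod_of_nonneg (fun k _ => le_of_lt (one_div_pos.mpr (h1tc k)))]
      apply ENNReal.ofReal_le_ofReal
      have hD : 0 < ∏ k, (1 + t * c k) := Finset.prod_pos (fun k _ => h1tc k)
      have hlogD : (K:ℝ) * (ε^2/(4*r^2)) ≤ Real.log (∏ k, (1 + t * c k)) := by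
        rw [Real.log_prod (fun k _ => ne_of_gt (h1tc k))]
        apply chernoff_core' K hK ε r t (1 + t*ε) (ε - (a-1)) ((b-1) - ε) c hε hr hεr
          ht_def rfl (by linarith) (by linarith) (by rw [hr_def]; ring)
        · intro k; constructor
          · have := (hck k).1; linarith
          · have := (hck k).2; linarith
        · have hsc : ∑ k, c k = (∑ k, ρv k) - K := by
            simp only [hc_def]
            rw [Finset.sum_sub_distrib, Finset.sum_const, Finset.card_univ, Fintype.card_fin,
              nsmul_eq_mul, mul_one]
          rw [hsc]; nlinarith
      have hexp : Real.exp ((K:ℝ) * (ε^2/(4*r^2))) ≤ ∏ k, (1 + t * c k) := by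
        calc Real.exp ((K:ℝ) * (ε^2/(4*r^2))) ≤ Real.exp (Real.log (∏ k, (1 + t * c k))) :=
              Real.exp_le_exp.mpr hlogD
          _ = ∏ k, (1 + t * c k) := Real.exp_log hD
      have heq : -((K:ℝ) * ε ^ 2) / (4 * (b - a) ^ 2) = -((K:ℝ) * (ε^2/(4*r^2))) := by
        rw [hr_def]; field_simp
      rw [heq, Real.exp_neg]
      calc ∏ k, (1/(1 + t * c k)) = (∏ k, (1 + t * c k))⁻¹ := by
            simp_rw [one_div]; rw [← Finset.prod_inv_distrib]
        _ ≤ (Real.exp ((K:ℝ) * (ε^2/(4*r^2))))⁻¹ := by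
            apply inv_anti₀ (Real.exp_pos _) hexp
    calc μK ((fun (Y : Fin K → ℝ) (k : Fin K) => Y k / ∑ j, Y j) ⁻¹'
          {v : Fin K → ℝ | ∑ k, ρv k * v k ≤ 1})
        ≤ μK {Y : Fin K → ℝ | ∑ k, c k * Y k ≤ 0} + μK {Y : Fin K → ℝ | ∃ k, Y k ≤ 0} :=
          hmono.trans hunion
      _ = μK {Y : Fin K → ℝ | ∑ k, c k * Y k ≤ 0} := by rw [hN, add_zero]
      _ ≤ ∏ k, ENNReal.ofReal (1/(1 + t * c k)) := hmarkov.trans (le_of_eq hlint)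
      _ ≤ ENNReal.ofReal (Real.exp (-((K:ℝ) * ε ^ 2) / (4 * (b - a) ^ 2))) := hfinal
  · -- case a > 1 : event is null
    push_neg at hcase
    have hsub : (fun (Y : Fin K → ℝ) (k : Fin K) => Y k / ∑ j, Y j) ⁻¹'
        {v : Fin K → ℝ | ∑ k, ρv k * v k ≤ 1} ⊆ {Y : Fin K → ℝ | ∃ k, Y k ≤ 0} := by
      intro Y hY
      by_contra hYN
      simp only [Set.mem_setOf_eq, not_exists, not_le] at hYN
      have hS : 0 < ∑ j, Y j :=
        Finset.sum_pos (fun j _ => hYN j) ⟨⟨0, by omega⟩, Finset.mem_univ _⟩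
      have hstrict : ∑ j, Y j < ∑ k, ρv k * Y k := by
        calc ∑ j, Y j = ∑ j, 1 * Y j := by simp
          _ < ∑ k, ρv k * Y k := by
              apply Finset.sum_lt_sum_of_nonempty ⟨⟨0, by omega⟩, Finset.mem_univ _⟩
              intro k _
              exact mul_lt_mul_of_pos_right (lt_of_lt_of_le hcase (hbd k).1) (hYN k)
      have hY' : ∑ k, ρv k * (Y k / ∑ j, Y j) ≤ 1 := Set.mem_preimage.mp hY
      have heq : ∑ k, ρv k * (Y k / ∑ j, Y j) = (∑ k, ρv k * Y k) / (∑ j, Y j) := by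
        rw [Finset.sum_div]; exact Finset.sum_congr rfl fun k _ => (mul_div_assoc _ _ _).symm
      rw [heq, div_le_one hS] at hY'
      linarith
    calc μK ((fun (Y : Fin K → ℝ) (k : Fin K) => Y k / ∑ j, Y j) ⁻¹'
          {v : Fin K → ℝ | ∑ k, ρv k * v k ≤ 1})
        ≤ μK {Y : Fin K → ℝ | ∃ k, Y k ≤ 0} := measure_mono hsub
      _ = 0 := hN
      _ ≤ _ := zero_le

lemma canon_card_le (T L : ℕ) [DecidablePred (fun f : Fin (L+2) → Fin T =>
      Function.Injective f ∧ ∀ m, f 0 ≤ f m)] :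
    (Finset.univ.filter (fun f : Fin (L+2) → Fin T =>
        Function.Injective f ∧ ∀ m, f 0 ≤ f m)).card
      ≤ Nat.choose T (L+2) * Nat.factorial (L+1) := by
  set S := Finset.univ.filter (fun f : Fin (L+2) → Fin T =>
      Function.Injective f ∧ ∀ m, f 0 ≤ f m) with hS
  refine Nat.le_of_mul_le_mul_right ?_ (show 0 < L+2 by omega)
  have hΘ : Function.Injective (fun fp : {f // f ∈ S} × Fin (L+2) =>
      (⟨fun x => fp.1.1 (x + fp.2), by
        obtain ⟨⟨f, hf⟩, r⟩ := fp
        have hinj := (Finset.mem_filter.mp hf).2.1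
        exact hinj.comp (add_left_injective r)⟩ : Fin (L+2) ↪ Fin T)) := by
    rintro ⟨⟨f1, hf1⟩, r1⟩ ⟨⟨f2, hf2⟩, r2⟩ h
    obtain ⟨hinj1, hmin1⟩ := (Finset.mem_filter.mp hf1).2
    obtain ⟨hinj2, hmin2⟩ := (Finset.mem_filter.mp hf2).2
    have hfun : ∀ x : Fin (L+2), f1 (x + r1) = f2 (x + r2) := by
      intro x
      exact congrFun (congrArg (fun (e : Fin (L+2) ↪ Fin T) => (e : Fin (L+2) → Fin T)) h) x
    have h1 : f1 (-r2 + r1) = f2 0 := by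
      have := hfun (-r2); rwa [neg_add_cancel] at this
    have h2 : f2 (-r1 + r2) = f1 0 := by
      have := hfun (-r1)
      rw [neg_add_cancel] at this; exact this.symm
    have e0 : f1 0 = f2 0 := le_antisymm (h1 ▸ hmin1 (-r2 + r1)) (h2 ▸ hmin2 (-r1 + r2))
    have hr : r1 = r2 := by
      have h3 : f1 (-r2 + r1) = f1 0 := by rw [h1, ← e0]
      have h4 : -r2 + r1 = 0 := hinj1 h3
      have := neg_add_eq_zero.mp h4
      exact this.symm
    have hff : f1 = f2 := by
      funext x
      have := hfun (x - r1)
      rwa [sub_add_cancel, hr, sub_add_cancel] at this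
    subst hr
    simp only [Prod.mk.injEq, Subtype.mk.injEq]
    exact ⟨hff, trivial⟩
  have hcard := Fintype.card_le_of_injective _ hΘ
  rw [Fintype.card_prod, Fintype.card_coe, Fintype.card_fin, Fintype.card_embedding_eq,
    Fintype.card_fin, Fintype.card_fin] at hcard
  calc S.card * (L+2) ≤ T.descFactorial (L+2) := hcard
    _ = Nat.choose T (L+2) * Nat.factorial (L+1) * (L+2) := by
        rw [Nat.descFactorial_eq_factorial_mul_choose]
        rw [show (L+2) = (L+1)+1 from rfl, Nat.factorial_succ]
        ring

end Helpers

/-- If all price ratios lie in `[a,b]` and on every directed cycle of distinct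
vertices some edge has Carli mean at least `1 + ε`, then for i.i.d. uniform
budget shares the probability that the revealed-preference graph
(edge `i → j` iff `⟨ρ_{ij}, w_j⟩ ≤ 1`) contains a directed cycle is at most
`C_T * exp (-K ε² / (4 (b-a)²))`, where `C_T = ∑_{L=2}^T (T choose L) (L-1)!`. -/
theorem prob_directed_cycle_bound
    {Ω : Type*} [MeasureSpace Ω] (P : Measure Ω) [IsProbabilityMeasure P]
    (T K : ℕ) (hT : 2 ≤ T) (hK : 1 ≤ K)
    (a b ε : ℝ) (ha : 0 < a) (hab : a ≤ b) (hε : 0 < ε)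
    (ρ : Fin T → Fin T → Fin K → ℝ)
    (hbd : ∀ i j, i ≠ j → ∀ k, a ≤ ρ i j k ∧ ρ i j k ≤ b)
    (hdisp : ∀ (L : ℕ), ∀ f : Fin (L + 2) → Fin T, Function.Injective f →
      ∃ ℓ : Fin (L + 2), 1 + ε ≤ ((1 : ℝ) / K) * ∑ k, ρ (f ℓ) (f (ℓ + 1)) k)
    (w : Fin T → Ω → (Fin K → ℝ))
    (hmeas : ∀ i, Measurable (w i))
    (hindep : iIndepFun w P)
    (hdist : ∀ i, P.map (w i) = simplexUniform K) :
    P {ω | ∃ (L : ℕ) (f : Fin (L + 2) → Fin T), Function.Injective f ∧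
        ∀ ℓ : Fin (L + 2), ∑ k, ρ (f ℓ) (f (ℓ + 1)) k * w (f (ℓ + 1)) ω k ≤ 1}
      ≤ (∑ L ∈ Finset.Icc 2 T, (Nat.choose T L * Nat.factorial (L - 1) : ℝ≥0∞)) *
        ENNReal.ofReal (Real.exp (-(K * ε ^ 2) / (4 * (b - a) ^ 2))) := by
  classical
  obtain ⟨p, hp⟩ : ∃ p : ℝ≥0∞,
      p = ENNReal.ofReal (Real.exp (-((K:ℝ) * ε ^ 2) / (4 * (b - a) ^ 2))) := ⟨_, rfl⟩
  -- cycle events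
  obtain ⟨Cyc, hCyc⟩ : ∃ Cyc : (L : ℕ) → (Fin (L+2) → Fin T) → Set Ω,
      Cyc = fun L f => {ω | ∀ ℓ : Fin (L+2),
        ∑ k, ρ (f ℓ) (f (ℓ+1)) k * w (f (ℓ+1)) ω k ≤ 1} := ⟨_, rfl⟩
  obtain ⟨canon, hcanon⟩ : ∃ canon : (L : ℕ) → Finset (Fin (L+2) → Fin T),
      canon = fun L => Finset.univ.filter (fun f : Fin (L+2) → Fin T =>
        Function.Injective f ∧ ∀ m, f 0 ≤ f m) := ⟨_, rfl⟩
  -- step A : the event is contained in the union over canonical cycles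
  have hsub : {ω | ∃ (L : ℕ) (f : Fin (L + 2) → Fin T), Function.Injective f ∧
        ∀ ℓ : Fin (L + 2), ∑ k, ρ (f ℓ) (f (ℓ + 1)) k * w (f (ℓ + 1)) ω k ≤ 1}
      ⊆ ⋃ L ∈ Finset.range (T-1), ⋃ f ∈ canon L, Cyc L f := by
    intro ω hω
    obtain ⟨L, f, hinj, hcyc⟩ := hω
    have hLT : L + 2 ≤ T := by
      have := Fintype.card_le_of_injective f hinj
      simpa using this
    obtain ⟨m, hm⟩ := Finite.exists_min f
    simp only [Set.mem_iUnion]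
    refine ⟨L, by simp only [Finset.mem_range]; omega, fun x => f (x + m), ?_, ?_⟩
    · rw [hcanon]
      simp only [Finset.mem_filter, Finset.mem_univ, true_and]
      refine ⟨hinj.comp (add_left_injective m), fun x => ?_⟩
      simpa using hm (x + m)
    · rw [hCyc]
      intro ℓ
      have := hcyc (ℓ + m)
      simpa [add_right_comm ℓ (1 : Fin (L+2)) m] using this
  -- step C : bound for a single canonical cycle
  have hsingle : ∀ (L : ℕ), ∀ f ∈ canon L, P (Cyc L f) ≤ p := by
    intro L f hf
    rw [hcanon] at hf
    obtain ⟨hinj, -⟩ := (Finset.mem_filter.mp hf).2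
    obtain ⟨ℓ, hℓ⟩ := hdisp L f hinj
    have hne : f ℓ ≠ f (ℓ + 1) := by
      intro hEq
      have h1 : ℓ = ℓ + 1 := hinj hEq
      have h2 : (1 : Fin (L+2)) = 0 := by
        have := left_eq_add.mp h1
        exact this
      have := Fin.one_eq_zero_iff.mp h2
      omega
    have hAedge : MeasurableSet {v : Fin K → ℝ | ∑ k, ρ (f ℓ) (f (ℓ+1)) k * v k ≤ 1} :=
      measurableSet_le (Finset.univ.measurable_sum fun k _ =>
        (measurable_pi_apply k).const_mul _) measurable_const
    have hsub2 : Cyc L f ⊆ (w (f (ℓ+1)))⁻¹'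
        {v : Fin K → ℝ | ∑ k, ρ (f ℓ) (f (ℓ+1)) k * v k ≤ 1} := by
      rw [hCyc]
      intro ω hω
      exact hω ℓ
    calc P (Cyc L f) ≤ P ((w (f (ℓ+1)))⁻¹'
          {v : Fin K → ℝ | ∑ k, ρ (f ℓ) (f (ℓ+1)) k * v k ≤ 1}) := measure_mono hsub2
      _ = (P.map (w (f (ℓ+1)))) {v : Fin K → ℝ | ∑ k, ρ (f ℓ) (f (ℓ+1)) k * v k ≤ 1} :=
          (Measure.map_apply (hmeas _) hAedge).symm
      _ = simplexUniform K {v : Fin K → ℝ | ∑ k, ρ (f ℓ) (f (ℓ+1)) k * v k ≤ 1} := by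
          rw [hdist]
      _ ≤ p := by
          rw [hp]
          exact edge_bound K hK ha hab hε _ (hbd _ _ hne) hℓ
  -- step B+D : union bound and counting
  calc P {ω | ∃ (L : ℕ) (f : Fin (L + 2) → Fin T), Function.Injective f ∧
        ∀ ℓ : Fin (L + 2), ∑ k, ρ (f ℓ) (f (ℓ + 1)) k * w (f (ℓ + 1)) ω k ≤ 1}
      ≤ P (⋃ L ∈ Finset.range (T-1), ⋃ f ∈ canon L, Cyc L f) := measure_mono hsub
    _ ≤ ∑ L ∈ Finset.range (T-1), P (⋃ f ∈ canon L, Cyc L f) :=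
        measure_biUnion_finset_le _ _
    _ ≤ ∑ L ∈ Finset.range (T-1), ∑ f ∈ canon L, P (Cyc L f) :=
        Finset.sum_le_sum fun L _ => measure_biUnion_finset_le _ _
    _ ≤ ∑ L ∈ Finset.range (T-1), ((Nat.choose T (L+2) * Nat.factorial (L+1) : ℕ) : ℝ≥0∞) * p := by
        apply Finset.sum_le_sum
        intro L _
        calc ∑ f ∈ canon L, P (Cyc L f) ≤ (canon L).card • p :=
              Finset.sum_le_card_nsmul _ _ _ (fun f hf => hsingle L f hf)
          _ = ((canon L).card : ℝ≥0∞) * p := by rw [nsmul_eq_mul]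
          _ ≤ ((Nat.choose T (L+2) * Nat.factorial (L+1) : ℕ) : ℝ≥0∞) * p := by
              apply mul_le_mul_left
              apply Nat.cast_le.mpr
              rw [hcanon]
              exact canon_card_le T L
    _ = (∑ L ∈ Finset.Icc 2 T, (Nat.choose T L * Nat.factorial (L - 1) : ℝ≥0∞)) *
        ENNReal.ofReal (Real.exp (-(K * ε ^ 2) / (4 * (b - a) ^ 2))) := by
        rw [← Finset.sum_mul, hp]
        congr 1
        apply Finset.sum_nbij' (i := fun L => L + 2) (j := fun L => L - 2)
        · intro L hL; simp only [Finset.mem_range] at hL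
          simp only [Finset.mem_Icc]; omega
        · intro L hL; simp only [Finset.mem_Icc] at hL
          simp only [Finset.mem_range]; omega
        · intro L _; omega
        · intro L hL; simp only [Finset.mem_Icc] at hL; omega
        · intro L _
          have h21 : L + 2 - 1 = L + 1 := by omega
          rw [h21]
          push_cast
          ring
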